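/- With the setup of the dual objective g(λ₀,…,λ_T) = −ε ⟨K̂, U(λ)⟩ − Σ_t ‖λ_t‖²/(4γ_t) + Σ_t λ_tᵀ r_t, where u_t = exp(G_tᵀ λ_t/ε) and U = u₀ ⊗ ⋯ ⊗ u_T, the gradient of g with respect to λ_t equals −G_t (v_t ⊙ u_t) − λ_t/(2γ_t) + r_t, where v_t = P_t(K̂ ⊙ U) ./ u_t is the entrywise quotient of the t-th marginal projection by u_t. -/

import Mathlib

open Matrix
open scoped RealInnerProductSpace

/-- the gradient of the dual objective
`g(λ) = −ε ⟨Khat, U(λ)⟩ − ∑_s ‖λ_s‖²/(4γ_s) + ∑_s λ_sᵀ r_s` with respect to the block `λ_t`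
(other blocks held fixed) equals `−G_t (v_t ⊙ u_t) − λ_t/(2γ_t) + r_t`, where
`u_s = exp(G_sᵀ λ_s / ε)` entrywise and `v_t = P_t(Khat ⊙ U) ./ u_t`. -/
theorem stmt17 {n T : ℕ} (Khat : (Fin (T + 1) → Fin n) → ℝ)
    (m : Fin (T + 1) → ℕ) (G : ∀ s, Matrix (Fin (m s)) (Fin n) ℝ)
    (r : ∀ s, Fin (m s) → ℝ) (ε : ℝ) (hε : 0 < ε)
    (γ : Fin (T + 1) → ℝ) (hγ : ∀ s, 0 < γ s)
    (lam : (s : Fin (T + 1)) → Fin (m s) → ℝ) (t : Fin (T + 1)) :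
    HasGradientAt
      (fun μ : EuclideanSpace ℝ (Fin (m t)) =>
        (fun l : (s : Fin (T + 1)) → Fin (m s) → ℝ =>
            -ε * (∑ i : Fin (T + 1) → Fin n,
                Khat i * ∏ s, Real.exp ((G s)ᵀ.mulVec (l s) (i s) / ε))
              - (∑ s, (∑ k, (l s k) ^ 2) / (4 * γ s))
              + ∑ s, ∑ k, l s k * r s k)
          (Function.update lam t (fun k => μ k)))
      ((WithLp.equiv 2 (Fin (m t) → ℝ)).symm
        (fun k =>
          -(G t).mulVec
              (fun j =>
                ((∑ i : Fin (T + 1) → Fin n,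
                    if i t = j then
                      Khat i * ∏ s, Real.exp ((G s)ᵀ.mulVec (lam s) (i s) / ε)
                    else 0)
                  / Real.exp ((G t)ᵀ.mulVec (lam t) j / ε))
                * Real.exp ((G t)ᵀ.mulVec (lam t) j / ε)) k
            - lam t k / (2 * γ t) + r t k))
      ((WithLp.equiv 2 (Fin (m t) → ℝ)).symm (lam t)) := by
  classical
  have hεne : ε ≠ 0 := ne_of_gt hε
  have hγne : γ t ≠ 0 := ne_of_gt (hγ t)
  set x : EuclideanSpace ℝ (Fin (m t)) := (WithLp.equiv 2 (Fin (m t) → ℝ)).symm (lam t) with hx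
  set a : (Fin (T + 1) → Fin n) → EuclideanSpace ℝ (Fin (m t)) :=
    fun i => (WithLp.equiv 2 (Fin (m t) → ℝ)).symm (fun k => G t k (i t)) with ha
  set c : (Fin (T + 1) → Fin n) → ℝ :=
    fun i => Khat i * ∏ s ∈ Finset.univ.erase t,
      Real.exp ((G s)ᵀ.mulVec (lam s) (i s) / ε) with hc
  set C₁ : ℝ := ∑ s ∈ Finset.univ.erase t, (∑ k, (lam s k) ^ 2) / (4 * γ s) with hC₁
  set C₂ : ℝ := ∑ s ∈ Finset.univ.erase t, ∑ k, lam s k * r s k with hC₂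
  set E : (Fin (T + 1) → Fin n) → ℝ := fun i => Real.exp (⟪a i, x⟫ * ε⁻¹) with hE
  have hinner : ∀ (i : Fin (T + 1) → Fin n) (μ : EuclideanSpace ℝ (Fin (m t))),
      (G t)ᵀ.mulVec (fun k => μ k) (i t) / ε = ⟪a i, μ⟫ * ε⁻¹ := by
    intro i μ
    simp [Matrix.mulVec, dotProduct, Matrix.transpose_apply, PiLp.inner_apply,
      RCLike.inner_apply, div_eq_mul_inv, ha]
    exact Or.inl (Finset.sum_congr rfl fun _ _ => mul_comm _ _)
  have hfun : (fun μ : EuclideanSpace ℝ (Fin (m t)) =>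
        (fun l : (s : Fin (T + 1)) → Fin (m s) → ℝ =>
            -ε * (∑ i : Fin (T + 1) → Fin n,
                Khat i * ∏ s, Real.exp ((G s)ᵀ.mulVec (l s) (i s) / ε))
              - (∑ s, (∑ k, (l s k) ^ 2) / (4 * γ s))
              + ∑ s, ∑ k, l s k * r s k)
          (Function.update lam t (fun k => μ k)))
      = fun μ : EuclideanSpace ℝ (Fin (m t)) =>
          -ε * (∑ i : Fin (T + 1) → Fin n, c i * Real.exp (⟪a i, μ⟫ * ε⁻¹))
            - ((∑ k, μ k * μ k) * (4 * γ t)⁻¹ + C₁)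
            + ((∑ k, μ k * r t k) + C₂) := by
    funext μ
    have hA : (∑ i : Fin (T + 1) → Fin n,
        Khat i * ∏ s, Real.exp ((G s)ᵀ.mulVec (Function.update lam t (fun k => μ k) s) (i s) / ε))
        = ∑ i : Fin (T + 1) → Fin n, c i * Real.exp (⟪a i, μ⟫ * ε⁻¹) := by
      refine Finset.sum_congr rfl fun i _ => ?_
      rw [← Finset.mul_prod_erase _ _ (Finset.mem_univ t), Function.update_self, hinner]
      have h2 : ∏ s ∈ Finset.univ.erase t,
          Real.exp ((G s)ᵀ.mulVec (Function.update lam t (fun k => μ k) s) (i s) / ε)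
          = ∏ s ∈ Finset.univ.erase t, Real.exp ((G s)ᵀ.mulVec (lam s) (i s) / ε) :=
        Finset.prod_congr rfl fun s hs => by
          rw [Function.update_of_ne (Finset.ne_of_mem_erase hs)]
      rw [h2, hc]; ring
    have hB : (∑ s, (∑ k, (Function.update lam t (fun k => μ k) s k) ^ 2) / (4 * γ s))
        = (∑ k, μ k * μ k) * (4 * γ t)⁻¹ + C₁ := by
      rw [← Finset.add_sum_erase _ _ (Finset.mem_univ t), Function.update_self]
      have h2 : ∑ s ∈ Finset.univ.erase t,
          (∑ k, (Function.update lam t (fun k => μ k) s k) ^ 2) / (4 * γ s) = C₁ :=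
        Finset.sum_congr rfl fun s hs => by
          rw [Function.update_of_ne (Finset.ne_of_mem_erase hs)]
      rw [h2]
      congr 1
      rw [div_eq_mul_inv]
      congr 1
      exact Finset.sum_congr rfl fun k _ => pow_two (μ k)
    have hC : (∑ s, ∑ k, Function.update lam t (fun k => μ k) s k * r s k)
        = (∑ k, μ k * r t k) + C₂ := by
      rw [← Finset.add_sum_erase _ _ (Finset.mem_univ t), Function.update_self]
      congr 1
      exact Finset.sum_congr rfl fun s hs => by
        rw [Function.update_of_ne (Finset.ne_of_mem_erase hs)]
    beta_reduce
    rw [hA, hB, hC]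
  rw [hfun, hasGradientAt_iff_hasFDerivAt]
  have hS : HasFDerivAt
      (fun μ : EuclideanSpace ℝ (Fin (m t)) =>
        ∑ i : Fin (T + 1) → Fin n, c i * Real.exp (⟪a i, μ⟫ * ε⁻¹))
      (∑ i : Fin (T + 1) → Fin n,
        c i • ((E i * ε⁻¹) • innerSL ℝ (a i))) x := by
    refine HasFDerivAt.fun_sum fun i _ => ?_
    have h1 : HasFDerivAt (fun μ : EuclideanSpace ℝ (Fin (m t)) => ⟪a i, μ⟫ * ε⁻¹)
        (ε⁻¹ • innerSL ℝ (a i)) x := ((innerSL ℝ (a i)).hasFDerivAt).mul_const ε⁻¹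
    simpa [hE, smul_smul] using (h1.exp).const_mul (c i)
  have hq : HasFDerivAt (fun μ : EuclideanSpace ℝ (Fin (m t)) => ∑ k, μ k * μ k)
      (∑ k, (2 * x k) • (EuclideanSpace.proj k : EuclideanSpace ℝ (Fin (m t)) →L[ℝ] ℝ)) x := by
    refine HasFDerivAt.fun_sum fun k _ => ?_
    have h := (EuclideanSpace.proj (𝕜 := ℝ) k).hasFDerivAt (x := x)
    simpa [two_mul, smul_smul, add_smul] using h.fun_mul h
  have hlin : HasFDerivAt (fun μ : EuclideanSpace ℝ (Fin (m t)) => ∑ k, μ k * r t k)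
      (∑ k, (r t k) • (EuclideanSpace.proj k : EuclideanSpace ℝ (Fin (m t)) →L[ℝ] ℝ)) x :=
    HasFDerivAt.fun_sum fun k _ =>
      ((EuclideanSpace.proj (𝕜 := ℝ) k).hasFDerivAt (x := x)).mul_const (r t k)
  have hTot := ((hS.const_mul (-ε)).sub ((hq.mul_const (4 * γ t)⁻¹).add_const C₁)).add
    (hlin.add_const C₂)
  refine hTot.congr_fderiv ?_
  refine ContinuousLinearMap.ext fun h => ?_
  have hexp : ∀ j, Real.exp ((G t)ᵀ.mulVec (lam t) j / ε) ≠ 0 := fun j => Real.exp_ne_zero _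
  have hfull : ∀ i : Fin (T + 1) → Fin n,
      Khat i * ∏ s, Real.exp ((G s)ᵀ.mulVec (lam s) (i s) / ε) = c i * E i := by
    intro i
    rw [← Finset.mul_prod_erase _ _ (Finset.mem_univ t), hc, hE]
    have h3 : (G t)ᵀ.mulVec (lam t) (i t) / ε = ⟪a i, x⟫ * ε⁻¹ := hinner i x
    rw [h3]; ring
  have hw : ∀ j, ((∑ i : Fin (T + 1) → Fin n,
        if i t = j then Khat i * ∏ s, Real.exp ((G s)ᵀ.mulVec (lam s) (i s) / ε) else 0)
          / Real.exp ((G t)ᵀ.mulVec (lam t) j / ε))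
        * Real.exp ((G t)ᵀ.mulVec (lam t) j / ε)
      = ∑ i : Fin (T + 1) → Fin n, if i t = j then c i * E i else 0 := by
    intro j
    rw [div_mul_cancel₀ _ (hexp j)]
    exact Finset.sum_congr rfl fun i _ => by rw [hfull]
  have hmv : ∀ k : Fin (m t),
      (G t).mulVec (fun j =>
        ((∑ i : Fin (T + 1) → Fin n,
            if i t = j then
              Khat i * ∏ s, Real.exp ((G s)ᵀ.mulVec (lam s) (i s) / ε)
            else 0)
          / Real.exp ((G t)ᵀ.mulVec (lam t) j / ε))
        * Real.exp ((G t)ᵀ.mulVec (lam t) j / ε)) k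
      = ∑ i : Fin (T + 1) → Fin n, (c i * E i) * G t k (i t) := by
    intro k
    show ∑ j, G t k j * _ = _
    calc ∑ j, G t k j * (((∑ i : Fin (T + 1) → Fin n,
            if i t = j then
              Khat i * ∏ s, Real.exp ((G s)ᵀ.mulVec (lam s) (i s) / ε)
            else 0)
          / Real.exp ((G t)ᵀ.mulVec (lam t) j / ε))
        * Real.exp ((G t)ᵀ.mulVec (lam t) j / ε))
        = ∑ j, ∑ i : Fin (T + 1) → Fin n, if i t = j then G t k j * (c i * E i) else 0 := by
          refine Finset.sum_congr rfl fun j _ => ?_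
          rw [hw j, Finset.mul_sum]
          exact Finset.sum_congr rfl fun i _ => by rw [mul_ite, mul_zero]
      _ = ∑ i : Fin (T + 1) → Fin n, ∑ j, if i t = j then G t k j * (c i * E i) else 0 :=
          Finset.sum_comm
      _ = ∑ i : Fin (T + 1) → Fin n, G t k (i t) * (c i * E i) := by
          refine Finset.sum_congr rfl fun i _ => ?_
          simp [Finset.sum_ite_eq]
      _ = ∑ i : Fin (T + 1) → Fin n, (c i * E i) * G t k (i t) :=
          Finset.sum_congr rfl fun i _ => mul_comm _ _
  simp only [ContinuousLinearMap.add_apply, ContinuousLinearMap.sub_apply,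
    ContinuousLinearMap.smul_apply, ContinuousLinearMap.coe_sum', Finset.sum_apply,
    InnerProductSpace.toDual_apply_apply, PiLp.inner_apply, RCLike.inner_apply,
    PiLp.proj_apply, smul_eq_mul, innerSL_apply_apply, conj_trivial, ha, hx,
    WithLp.equiv_symm_apply, PiLp.toLp_apply]
  have hR : ∑ k, (-(G t).mulVec (fun j =>
        ((∑ i : Fin (T + 1) → Fin n,
            if i t = j then
              Khat i * ∏ s, Real.exp ((G s)ᵀ.mulVec (lam s) (i s) / ε)
            else 0)
          / Real.exp ((G t)ᵀ.mulVec (lam t) j / ε))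
        * Real.exp ((G t)ᵀ.mulVec (lam t) j / ε)) k
      - lam t k / (2 * γ t) + r t k) * h k
      = -(∑ k, (∑ i : Fin (T + 1) → Fin n, (c i * E i) * G t k (i t)) * h k)
        - ∑ k, (lam t k / (2 * γ t)) * h k + ∑ k, r t k * h k := by
    rw [← Finset.sum_neg_distrib, ← Finset.sum_sub_distrib, ← Finset.sum_add_distrib]
    refine Finset.sum_congr rfl fun k _ => ?_
    rw [hmv k]
    ring
  simp only [mul_comm (h.ofLp _)]
  rw [hR]
  have h3 : ∑ k, (∑ i : Fin (T + 1) → Fin n, (c i * E i) * G t k (i t)) * h k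
      = ∑ i : Fin (T + 1) → Fin n, (c i * E i) * ∑ k, G t k (i t) * h k := by
    simp only [Finset.sum_mul, Finset.mul_sum, mul_assoc]
    exact Finset.sum_comm
  rw [h3]
  have h1 : -ε * ∑ i : Fin (T + 1) → Fin n, c i * (E i * ε⁻¹ * ∑ k, G t k (i t) * h k)
      = -(∑ i : Fin (T + 1) → Fin n, (c i * E i) * ∑ k, G t k (i t) * h k) := by
    rw [Finset.mul_sum, ← Finset.sum_neg_distrib]
    refine Finset.sum_congr rfl fun i _ => ?_
    field_simp
  have h2 : (4 * γ t)⁻¹ * ∑ k, 2 * lam t k * h k = ∑ k, (lam t k / (2 * γ t)) * h k := by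
    rw [Finset.mul_sum]
    refine Finset.sum_congr rfl fun k _ => ?_
    field_simp
    ring
  rw [h1, h2]
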